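/- Let ν₁, ν₂ be probability measures on a metric space (X, d) with Var(ν₁, ν₂) < ∞. Then |∫∫ d(x₁, x₂) dν₁(x₁) dν₂(x₂) − √Var(ν₁, ν₂)| ≤ √Var(ν₁) + √Var(ν₂). -/

import Mathlib

open scoped ENNReal

open MeasureTheory

section Aux

variable {α : Type*} [MeasurableSpace α]

/-- `(b ^ (1/2)) ^ 2 = b` in `ℝ≥0∞`. -/
lemma sq_rpow_half (b : ℝ≥0∞) : (b ^ (1 / 2 : ℝ)) ^ 2 = b := by
  rw [← ENNReal.rpow_natCast (b ^ (1 / 2 : ℝ)) 2, ← ENNReal.rpow_mul]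
  norm_num

/-- `(x ^ 2) ^ (1/2) = x` in `ℝ≥0∞`. -/
lemma rpow_half_sq (x : ℝ≥0∞) : (x ^ 2) ^ (1 / 2 : ℝ) = x := by
  rw [← ENNReal.rpow_natCast x 2, ← ENNReal.rpow_mul]
  norm_num

/-- `(a + b)^2 ≤ 2a² + 2b²` in `ℝ≥0∞`. -/
lemma sq_add_le_two_sq_add_two_sq (a b : ℝ≥0∞) : (a + b) ^ 2 ≤ 2 * a ^ 2 + 2 * b ^ 2 := by
  have hab : 2 * (a * b) ≤ a ^ 2 + b ^ 2 := by
    rcases le_total a b with hle | hle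
    · obtain ⟨c, rfl⟩ := le_iff_exists_add.mp hle
      calc 2 * (a * (a + c)) = a ^ 2 + (a ^ 2 + 2 * (a * c)) := by ring
        _ ≤ a ^ 2 + (a + c) ^ 2 := by gcongr; · ring_nf; exact le_add_right le_rfl
    · obtain ⟨c, rfl⟩ := le_iff_exists_add.mp hle
      calc 2 * ((b + c) * b) = b ^ 2 + (b ^ 2 + 2 * (b * c)) := by ring
        _ ≤ (b + c) ^ 2 + b ^ 2 := by
            rw [add_comm]
            gcongr
            ring_nf; exact le_add_right le_rfl
  calc (a + b) ^ 2 = a ^ 2 + b ^ 2 + 2 * (a * b) := by ring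
    _ ≤ a ^ 2 + b ^ 2 + (a ^ 2 + b ^ 2) := by gcongr
    _ = 2 * a ^ 2 + 2 * b ^ 2 := by ring

/-- Cauchy–Schwarz for a probability measure: `∫ f ≤ (∫ f²) ^ (1/2)`. -/
lemma cs_le (μ : Measure α) [IsProbabilityMeasure μ] {f : α → ℝ≥0∞}
    (hf : Measurable f) :
    ∫⁻ a, f a ∂μ ≤ (∫⁻ a, f a ^ 2 ∂μ) ^ (1 / 2 : ℝ) := by
  have hpq : Real.HolderConjugate 2 2 := Real.HolderConjugate.two_two
  have := ENNReal.lintegral_mul_le_Lp_mul_Lq μ hpq hf.aemeasurable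
    (aemeasurable_const (b := (1 : ℝ≥0∞)))
  have h2 : ∀ x : ℝ≥0∞, x ^ (2 : ℝ) = x ^ 2 := fun x => by
    rw [show (2:ℝ) = ((2:ℕ):ℝ) by norm_num, ENNReal.rpow_natCast]
  simp only [Pi.one_apply, mul_one, h2, one_pow, lintegral_one, measure_univ,
    ENNReal.one_rpow] at this
  simpa using this

/-- Squared version: `(∫ f)² ≤ ∫ f²`. -/
lemma cs_sq (μ : Measure α) [IsProbabilityMeasure μ] {f : α → ℝ≥0∞}
    (hf : Measurable f) :
    (∫⁻ a, f a ∂μ) ^ 2 ≤ ∫⁻ a, f a ^ 2 ∂μ := by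
  calc (∫⁻ a, f a ∂μ) ^ 2 ≤ ((∫⁻ a, f a ^ 2 ∂μ) ^ (1 / 2 : ℝ)) ^ 2 := by
        gcongr; exact cs_le μ hf
    _ = _ := sq_rpow_half _

/-- Key helper: `∫ (f + c)² ≤ ((∫ f²)^{1/2} + c)²`. -/
lemma lintegral_add_const_sq_le (μ : Measure α) [IsProbabilityMeasure μ] {f : α → ℝ≥0∞}
    (hf : Measurable f) (c : ℝ≥0∞) :
    ∫⁻ a, (f a + c) ^ 2 ∂μ ≤ ((∫⁻ a, f a ^ 2 ∂μ) ^ (1 / 2 : ℝ) + c) ^ 2 := by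
  set S := (∫⁻ a, f a ^ 2 ∂μ) ^ (1 / 2 : ℝ) with hS
  have hS2 : ∫⁻ a, f a ^ 2 ∂μ = S ^ 2 := (sq_rpow_half _).symm
  have h1 : ∫⁻ a, f a ∂μ ≤ S := cs_le μ hf
  calc ∫⁻ a, (f a + c) ^ 2 ∂μ
      = ∫⁻ a, (f a ^ 2 + (2 * c * f a + c ^ 2)) ∂μ := by
        congr 1; funext a; ring
    _ = (∫⁻ a, f a ^ 2 ∂μ) + (2 * c * (∫⁻ a, f a ∂μ) + c ^ 2) := by
        rw [lintegral_add_left (hf.pow_const 2),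
          lintegral_add_right _ measurable_const, lintegral_const_mul _ hf,
          lintegral_const, measure_univ, mul_one]
    _ ≤ S ^ 2 + (2 * c * S + c ^ 2) := by
        gcongr
        exact hS2.le
    _ = (S + c) ^ 2 := by ring

end Aux

section MeasAux

variable {X : Type*} [MetricSpace X] [MeasurableSpace X] [BorelSpace X]

/-- `x ↦ ∫⁻ t, edist x t ∂ρ` is measurable for a probability measure `ρ`. -/
lemma measurable_lintegral_edist (ρ : Measure X) [IsProbabilityMeasure ρ] :
    Measurable (fun x => ∫⁻ t, edist x t ∂ρ) := by
  set f : X → ℝ≥0∞ := fun x => ∫⁻ t, edist x t ∂ρ with hf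
  have key : ∀ x y : X, f x ≤ f y + edist x y := by
    intro x y
    calc f x ≤ ∫⁻ t, (edist y t + edist x y) ∂ρ := by
          refine lintegral_mono fun t => ?_
          calc edist x t ≤ edist x y + edist y t := edist_triangle _ _ _
            _ = edist y t + edist x y := add_comm _ _
      _ = f y + edist x y := by
          rw [lintegral_add_right _ measurable_const, lintegral_const, measure_univ, mul_one]
  by_cases htop : ∀ x, f x = ∞
  · simp only [hf] at htop ⊢
    have : (fun x => ∫⁻ t, edist x t ∂ρ) = fun _ => ∞ := funext htop
    rw [this]; exact measurable_const
  · push_neg at htop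
    obtain ⟨x₀, hx₀⟩ := htop
    have hfin : ∀ x, f x ≠ ∞ := by
      intro x hx
      have h1 : f x ≤ f x₀ + edist x x₀ := key x x₀
      rw [hx, top_le_iff] at h1
      exact (ENNReal.add_ne_top.mpr ⟨hx₀, edist_ne_top x x₀⟩) h1
    have hlip : LipschitzWith 1 (fun x => (f x).toReal) := by
      refine LipschitzWith.of_dist_le_mul fun x y => ?_
      rw [NNReal.coe_one, one_mul, Real.dist_eq, abs_sub_le_iff]
      constructor
      · have := key x y
        have h' : (f x).toReal ≤ (f y).toReal + (edist x y).toReal := by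
          rw [← ENNReal.toReal_add (hfin y) (edist_ne_top x y)]
          exact ENNReal.toReal_mono (by simp [hfin y, edist_ne_top x y]) this
        rw [← dist_edist] at h'; linarith
      · have := key y x
        have h' : (f y).toReal ≤ (f x).toReal + (edist y x).toReal := by
          rw [← ENNReal.toReal_add (hfin x) (edist_ne_top y x)]
          exact ENNReal.toReal_mono (by simp [hfin x, edist_ne_top y x]) this
        rw [← dist_edist, dist_comm] at h'; linarith
    have : f = fun x => ENNReal.ofReal ((f x).toReal) :=
      funext fun x => (ENNReal.ofReal_toReal (hfin x)).symm
    rw [this]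
    exact ENNReal.measurable_ofReal.comp hlip.continuous.measurable

end MeasAux

/-- The variance between two measures on a metric space:
`Var(μ, ν) = ∫∫ d²(x, y) dμ(x) dν(y)` (valued in `ℝ≥0∞`, may be `∞`). -/
noncomputable def Var {X : Type*} [MetricSpace X] [MeasurableSpace X]
    (μ ν : Measure X) : ℝ≥0∞ :=
  ∫⁻ x, ∫⁻ y, edist x y ^ 2 ∂ν ∂μ

/-- For probability measures `ν₁, ν₂` with `Var(ν₁, ν₂) < ∞`,
`|∫∫ d(x₁, x₂) dν₁(x₁) dν₂(x₂) − √Var(ν₁, ν₂)| ≤ √Var(ν₁) + √Var(ν₂)`. -/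
theorem abs_double_int_sub_sqrt_var_le {X : Type*} [MetricSpace X] [MeasurableSpace X]
    [BorelSpace X] (ν₁ ν₂ : Measure X) [IsProbabilityMeasure ν₁] [IsProbabilityMeasure ν₂]
    (h : Var ν₁ ν₂ ≠ ∞) :
    |(∫⁻ x, ∫⁻ y, edist x y ∂ν₂ ∂ν₁).toReal - (Var ν₁ ν₂ ^ (1 / 2 : ℝ)).toReal|
      ≤ (Var ν₁ ν₁ ^ (1 / 2 : ℝ)).toReal + (Var ν₂ ν₂ ^ (1 / 2 : ℝ)).toReal := by
  -- abbreviations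
  set E : X → ℝ≥0∞ := fun x => ∫⁻ y, edist x y ∂ν₂ with hE_def
  set D : X → ℝ≥0∞ := fun x => ∫⁻ x', edist x x' ∂ν₁ with hD_def
  have hE : Measurable E := measurable_lintegral_edist ν₂
  have hD : Measurable D := measurable_lintegral_edist ν₁
  set A : ℝ≥0∞ := ∫⁻ x, ∫⁻ y, edist x y ∂ν₂ ∂ν₁ with hA_def
  have hAE : A = ∫⁻ x, E x ∂ν₁ := by rw [hA_def, hE_def]
  have hVarV : Var ν₁ ν₂ = ∫⁻ x, ∫⁻ y, edist x y ^ 2 ∂ν₂ ∂ν₁ := rfl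
  -- Step 1 : A ≤ √V
  have hAV : A ≤ Var ν₁ ν₂ ^ (1 / 2 : ℝ) := by
    rw [hAE]
    calc ∫⁻ x, E x ∂ν₁ ≤ (∫⁻ x, E x ^ 2 ∂ν₁) ^ (1 / 2 : ℝ) := cs_le ν₁ hE
      _ ≤ (Var ν₁ ν₂) ^ (1 / 2 : ℝ) := by
          gcongr
          rw [hVarV]
          exact lintegral_mono fun x => cs_sq ν₂ (measurable_edist_right)
  -- claim2 : edist x y ≤ E x + E y
  have claim2 : ∀ x y : X, edist x y ≤ E x + E y := by
    intro x y
    calc edist x y = ∫⁻ y', edist x y ∂ν₂ := by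
          rw [lintegral_const, measure_univ, mul_one]
      _ ≤ ∫⁻ y', (edist x y' + edist y' y) ∂ν₂ :=
          lintegral_mono fun y' => edist_triangle _ _ _
      _ = E x + E y := by
          rw [lintegral_add_left measurable_edist_right]
          congr 1
          exact lintegral_congr fun y' => edist_comm y' y
  -- pointwise bound : edist x y ≤ D x + (A + E y)
  have ptwise : ∀ x y : X, edist x y ≤ D x + (A + E y) := by
    intro x y
    calc edist x y = ∫⁻ x', edist x y ∂ν₁ := by
          rw [lintegral_const, measure_univ, mul_one]
      _ ≤ ∫⁻ x', (edist x x' + (E x' + E y)) ∂ν₁ := by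
          refine lintegral_mono fun x' => ?_
          calc edist x y ≤ edist x x' + edist x' y := edist_triangle _ _ _
            _ ≤ edist x x' + (E x' + E y) := by gcongr; exact claim2 x' y
      _ = D x + (A + E y) := by
          rw [lintegral_add_left measurable_edist_right,
            lintegral_add_right _ measurable_const, lintegral_const, measure_univ, mul_one,
            hAE]
  -- Step 3 : V ≤ (S₁ + (A + S₂))²
  set S₁ : ℝ≥0∞ := (∫⁻ x, D x ^ 2 ∂ν₁) ^ (1 / 2 : ℝ) with hS₁_def
  set S₂ : ℝ≥0∞ := (∫⁻ y, E y ^ 2 ∂ν₂) ^ (1 / 2 : ℝ) with hS₂_def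
  have step3 : Var ν₁ ν₂ ≤ (S₁ + (A + S₂)) ^ 2 := by
    calc Var ν₁ ν₂ = ∫⁻ x, ∫⁻ y, edist x y ^ 2 ∂ν₂ ∂ν₁ := hVarV
      _ ≤ ∫⁻ x, ∫⁻ y, (E y + (D x + A)) ^ 2 ∂ν₂ ∂ν₁ := by
          refine lintegral_mono fun x => lintegral_mono fun y => ?_
          gcongr
          exact (ptwise x y).trans_eq (by ring)
      _ ≤ ∫⁻ x, (S₂ + (D x + A)) ^ 2 ∂ν₁ := by
          refine lintegral_mono fun x => ?_
          exact lintegral_add_const_sq_le ν₂ hE (D x + A)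
      _ = ∫⁻ x, (D x + (A + S₂)) ^ 2 ∂ν₁ := lintegral_congr fun x => by ring
      _ ≤ (S₁ + (A + S₂)) ^ 2 := lintegral_add_const_sq_le ν₁ hD (A + S₂)
  have hS₁ : S₁ ≤ Var ν₁ ν₁ ^ (1 / 2 : ℝ) := by
    rw [hS₁_def]
    gcongr
    exact lintegral_mono fun x => cs_sq ν₁ (measurable_edist_right)
  have hS₂ : S₂ ≤ Var ν₂ ν₂ ^ (1 / 2 : ℝ) := by
    rw [hS₂_def]
    gcongr
    exact lintegral_mono fun y => cs_sq ν₂ (measurable_edist_right)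
  have key : Var ν₁ ν₂ ^ (1 / 2 : ℝ)
      ≤ Var ν₁ ν₁ ^ (1 / 2 : ℝ) + (A + Var ν₂ ν₂ ^ (1 / 2 : ℝ)) := by
    calc Var ν₁ ν₂ ^ (1 / 2 : ℝ) ≤ ((S₁ + (A + S₂)) ^ 2) ^ (1 / 2 : ℝ) := by
          gcongr
      _ = S₁ + (A + S₂) := rpow_half_sq _
      _ ≤ _ := by gcongr
  -- finiteness of the RHS variances
  obtain ⟨x₀, hx₀⟩ : ∃ x₀ : X, (∫⁻ y, edist x₀ y ^ 2 ∂ν₂) ≠ ∞ := by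
    by_contra hc
    push_neg at hc
    apply h
    rw [hVarV]
    have : ∀ x : X, (∫⁻ y, edist x y ^ 2 ∂ν₂) = ∞ := fun x => hc x
    calc ∫⁻ x, ∫⁻ y, edist x y ^ 2 ∂ν₂ ∂ν₁ = ∫⁻ _, (∞ : ℝ≥0∞) ∂ν₁ :=
          lintegral_congr fun x => this x
      _ = ∞ := by rw [lintegral_const, measure_univ, mul_one]
  set V₂ : ℝ≥0∞ := ∫⁻ y, edist x₀ y ^ 2 ∂ν₂ with hV₂_def
  have hV₂comm : ∫⁻ y, edist y x₀ ^ 2 ∂ν₂ = V₂ := by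
    rw [hV₂_def]; exact lintegral_congr fun y => by rw [edist_comm]
  have hR₂ : Var ν₂ ν₂ ≠ ∞ := by
    have hb : Var ν₂ ν₂ ≤ (V₂ ^ (1 / 2 : ℝ) + V₂ ^ (1 / 2 : ℝ)) ^ 2 := by
      calc Var ν₂ ν₂ = ∫⁻ y, ∫⁻ y', edist y y' ^ 2 ∂ν₂ ∂ν₂ := rfl
        _ ≤ ∫⁻ y, ∫⁻ y', (edist x₀ y' + edist x₀ y) ^ 2 ∂ν₂ ∂ν₂ := by
            refine lintegral_mono fun y => lintegral_mono fun y' => ?_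
            gcongr
            calc edist y y' ≤ edist y x₀ + edist x₀ y' := edist_triangle _ _ _
              _ = edist x₀ y' + edist x₀ y := by rw [edist_comm y x₀]; ring
        _ ≤ ∫⁻ y, (V₂ ^ (1 / 2 : ℝ) + edist x₀ y) ^ 2 ∂ν₂ := by
            refine lintegral_mono fun y => ?_
            exact lintegral_add_const_sq_le ν₂ measurable_edist_right (edist x₀ y)
        _ = ∫⁻ y, (edist x₀ y + V₂ ^ (1 / 2 : ℝ)) ^ 2 ∂ν₂ := lintegral_congr fun y => by ring
        _ ≤ (V₂ ^ (1 / 2 : ℝ) + V₂ ^ (1 / 2 : ℝ)) ^ 2 :=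
            lintegral_add_const_sq_le ν₂ measurable_edist_right _
    refine ne_top_of_le_ne_top ?_ hb
    have : V₂ ^ (1 / 2 : ℝ) ≠ ∞ := ENNReal.rpow_ne_top_of_nonneg (by norm_num) hx₀
    exact ENNReal.pow_ne_top (ENNReal.add_ne_top.mpr ⟨this, this⟩)
  have hW : (∫⁻ x, edist x x₀ ^ 2 ∂ν₁) ≠ ∞ := by
    have hb : (∫⁻ x, edist x x₀ ^ 2 ∂ν₁) ≤ 2 * Var ν₁ ν₂ + 2 * V₂ := by
      calc ∫⁻ x, edist x x₀ ^ 2 ∂ν₁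
          ≤ ∫⁻ x, (2 * (∫⁻ y, edist x y ^ 2 ∂ν₂) + 2 * V₂) ∂ν₁ := by
            refine lintegral_mono fun x => ?_
            calc edist x x₀ ^ 2 = ∫⁻ y, edist x x₀ ^ 2 ∂ν₂ := by
                  rw [lintegral_const, measure_univ, mul_one]
              _ ≤ ∫⁻ y, (2 * edist x y ^ 2 + 2 * edist y x₀ ^ 2) ∂ν₂ := by
                  refine lintegral_mono fun y => ?_
                  calc edist x x₀ ^ 2 ≤ (edist x y + edist y x₀) ^ 2 := by
                        gcongr; exact edist_triangle _ _ _
                    _ ≤ 2 * edist x y ^ 2 + 2 * edist y x₀ ^ 2 :=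
                        sq_add_le_two_sq_add_two_sq _ _
              _ = 2 * (∫⁻ y, edist x y ^ 2 ∂ν₂) + 2 * V₂ := by
                  rw [lintegral_add_left (by fun_prop : Measurable fun y : X => 2 * edist x y ^ 2),
                    lintegral_const_mul' _ _ (by norm_num),
                    lintegral_const_mul' _ _ (by norm_num), hV₂comm]
        _ = 2 * Var ν₁ ν₂ + 2 * V₂ := by
            rw [lintegral_add_right _ measurable_const, lintegral_const, measure_univ, mul_one,
              lintegral_const_mul' _ _ (by norm_num)]
            rfl
    refine ne_top_of_le_ne_top ?_ hb
    exact ENNReal.add_ne_top.mpr ⟨ENNReal.mul_ne_top (by norm_num) h,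
      ENNReal.mul_ne_top (by norm_num) hx₀⟩
  set W : ℝ≥0∞ := ∫⁻ x, edist x x₀ ^ 2 ∂ν₁ with hW_def
  have hR₁ : Var ν₁ ν₁ ≠ ∞ := by
    have hb : Var ν₁ ν₁ ≤ (W ^ (1 / 2 : ℝ) + W ^ (1 / 2 : ℝ)) ^ 2 := by
      calc Var ν₁ ν₁ = ∫⁻ x, ∫⁻ x', edist x x' ^ 2 ∂ν₁ ∂ν₁ := rfl
        _ ≤ ∫⁻ x, ∫⁻ x', (edist x' x₀ + edist x x₀) ^ 2 ∂ν₁ ∂ν₁ := by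
            refine lintegral_mono fun x => lintegral_mono fun x' => ?_
            gcongr
            calc edist x x' ≤ edist x x₀ + edist x₀ x' := edist_triangle _ _ _
              _ = edist x' x₀ + edist x x₀ := by rw [edist_comm x₀ x']; ring
        _ ≤ ∫⁻ x, (W ^ (1 / 2 : ℝ) + edist x x₀) ^ 2 ∂ν₁ := by
            refine lintegral_mono fun x => ?_
            exact lintegral_add_const_sq_le ν₁ measurable_edist_left (edist x x₀)
        _ = ∫⁻ x, (edist x x₀ + W ^ (1 / 2 : ℝ)) ^ 2 ∂ν₁ := lintegral_congr fun x => by ring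
        _ ≤ (W ^ (1 / 2 : ℝ) + W ^ (1 / 2 : ℝ)) ^ 2 :=
            lintegral_add_const_sq_le ν₁ measurable_edist_left _
    refine ne_top_of_le_ne_top ?_ hb
    have : W ^ (1 / 2 : ℝ) ≠ ∞ := ENNReal.rpow_ne_top_of_nonneg (by norm_num) hW
    exact ENNReal.pow_ne_top (ENNReal.add_ne_top.mpr ⟨this, this⟩)
  -- final real-number computation
  have hVh : Var ν₁ ν₂ ^ (1 / 2 : ℝ) ≠ ∞ := ENNReal.rpow_ne_top_of_nonneg (by norm_num) h
  have hR₁h : Var ν₁ ν₁ ^ (1 / 2 : ℝ) ≠ ∞ := ENNReal.rpow_ne_top_of_nonneg (by norm_num) hR₁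
  have hR₂h : Var ν₂ ν₂ ^ (1 / 2 : ℝ) ≠ ∞ := ENNReal.rpow_ne_top_of_nonneg (by norm_num) hR₂
  have hAfin : A ≠ ∞ := ne_top_of_le_ne_top hVh hAV
  have hle : A.toReal ≤ (Var ν₁ ν₂ ^ (1 / 2 : ℝ)).toReal := ENNReal.toReal_mono hVh hAV
  have habs : |A.toReal - (Var ν₁ ν₂ ^ (1 / 2 : ℝ)).toReal|
      = (Var ν₁ ν₂ ^ (1 / 2 : ℝ)).toReal - A.toReal := by
    rw [abs_sub_comm, abs_of_nonneg (sub_nonneg.mpr hle)]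
  rw [habs]
  have hkey : (Var ν₁ ν₂ ^ (1 / 2 : ℝ)).toReal
      ≤ (Var ν₁ ν₁ ^ (1 / 2 : ℝ)).toReal + (A.toReal + (Var ν₂ ν₂ ^ (1 / 2 : ℝ)).toReal) := by
    have := ENNReal.toReal_mono (by
      exact ENNReal.add_ne_top.mpr ⟨hR₁h, ENNReal.add_ne_top.mpr ⟨hAfin, hR₂h⟩⟩) key
    rwa [ENNReal.toReal_add hR₁h (ENNReal.add_ne_top.mpr ⟨hAfin, hR₂h⟩),
      ENNReal.toReal_add hAfin hR₂h] at this
  linarith
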